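/- If n is an odd positive integer and f(n) is even, then f(f(n)) = n − 1; in particular f(f(n)) is even. -/

import Mathlib

/-- The map `f(n) = ⌊n/√2⌋` if `n` is even and `f(n) = ⌊n·√2⌋` if `n` is odd. -/
noncomputable def f (n : ℕ) : ℕ :=
  if Even n then ⌊(n : ℝ) / Real.sqrt 2⌋₊ else ⌊(n : ℝ) * Real.sqrt 2⌋₊

/-- If `n` is an odd positive integer and `f(n)` is even, then `f(f(n)) = n - 1`;
in particular `f(f(n))` is even. -/
theorem f_f_odd_even (n : ℕ) (hn : 0 < n) (hno : Odd n) (hfe : Even (f n)) :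
    f (f n) = n - 1 ∧ Even (f (f n)) := by
  have hs2 : (0:ℝ) < Real.sqrt 2 := Real.sqrt_pos.mpr (by norm_num)
  have hs2' : (1:ℝ) < Real.sqrt 2 := by
    nlinarith [Real.sq_sqrt (by norm_num : (2:ℝ) ≥ 0)]
  have hfn : f n = ⌊(n : ℝ) * Real.sqrt 2⌋₊ := by
    simp [f, Nat.not_even_iff_odd.mpr hno]
  set m := ⌊(n : ℝ) * Real.sqrt 2⌋₊ with hm
  have hirr : Irrational ((n : ℝ) * Real.sqrt 2) := by
    exact (irrational_sqrt_two.natCast_mul hn.ne')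
  have hpos : (0:ℝ) ≤ (n : ℝ) * Real.sqrt 2 := by positivity
  have hlow : (m : ℝ) < (n : ℝ) * Real.sqrt 2 := by
    rcases lt_or_eq_of_le (Nat.floor_le hpos) with h | h
    · exact h
    · exact absurd h.symm (hirr.ne_nat m)
  have hup : (n : ℝ) * Real.sqrt 2 < m + 1 := Nat.lt_floor_add_one _
  have hff : f (f n) = ⌊(m : ℝ) / Real.sqrt 2⌋₊ := by
    rw [hfn] at hfe ⊢
    simp [f, hfe]
  have hkey : ⌊(m : ℝ) / Real.sqrt 2⌋₊ = n - 1 := by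
    have h2 : Real.sqrt 2 * Real.sqrt 2 = 2 := Real.mul_self_sqrt (by norm_num)
    rw [Nat.floor_eq_iff (by positivity)]
    have hn1 : ((n - 1 : ℕ) : ℝ) = (n : ℝ) - 1 := by
      have : (1:ℕ) ≤ n := hn
      push_cast [this]; ring
    rw [hn1]
    constructor
    · rw [le_div_iff₀ hs2]
      nlinarith
    · have : (n : ℝ) - 1 + 1 = n := by ring
      rw [this, div_lt_iff₀ hs2]
      nlinarith
  have heq : f (f n) = n - 1 := by rw [hff, hkey]
  refine ⟨heq, ?_⟩
  rw [heq]
  rcases hno with ⟨k, hk⟩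
  exact ⟨k, by omega⟩
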